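/- Let $\widehat T=[-1,1]^2$ and let $(\hat u,\hat v)\in C^1(\widehat T)^2$. Let $(\hat u_k,\hat v_k)=\widehat I_V^c(\hat u,\hat v)$ be the interpolant in $RT_2(\widehat T)=\Q_{3,2}\times\Q_{2,3}$ defined by the 24 conditions: matching of function values and of $\partial_x\hat u$, $\partial_y\hat v$ at the four corners, matching of the edge mean values of $\hat u$ and $\partial_x\hat u$ on the vertical edges $\hat x=\pm1$, and matching of the edge mean values of $\hat v$ and $\partial_y\hat v$ on the horizontal edges $\hat y=\pm1$. Then the mean value over the top edge of the divergence of the interpolant equals the mean value over the top edge of the divergence of $(\hat u,\hat v)$: $\int_{-1}^1 \operatorname{div}(\hat u_k,\hat v_k)(\hat x,1)\,d\hat x = \int_{-1}^1 \operatorname{div}(\hat u,\hat v)(\hat x,1)\,d\hat x$. -/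

import Mathlib

open intervalIntegral

/-- Partial derivative in the first variable. -/
noncomputable def pdx (f : ℝ → ℝ → ℝ) (x y : ℝ) : ℝ := deriv (fun t => f t y) x

/-- Partial derivative in the second variable. -/
noncomputable def pdy (f : ℝ → ℝ → ℝ) (x y : ℝ) : ℝ := deriv (fun t => f x t) y

/-- `p` is a polynomial of degree at most `m` in `x` and `n` in `y`. -/
def MemQ (m n : ℕ) (p : ℝ → ℝ → ℝ) : Prop :=
  ∃ c : ℕ → ℕ → ℝ, (∀ i j, (m < i ∨ n < j) → c i j = 0) ∧
    ∀ x y, p x y = ∑ i ∈ Finset.range (m + 1), ∑ j ∈ Finset.range (n + 1),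
      c i j * x ^ i * y ^ j

lemma memQ_contDiff {m n : ℕ} {p : ℝ → ℝ → ℝ} (h : MemQ m n p) :
    ContDiff ℝ 1 (fun q : ℝ × ℝ => p q.1 q.2) := by
  obtain ⟨c, -, hp⟩ := h
  have he : (fun q : ℝ × ℝ => p q.1 q.2) = fun q : ℝ × ℝ =>
      ∑ i ∈ Finset.range (m + 1), ∑ j ∈ Finset.range (n + 1),
        c i j * q.1 ^ i * q.2 ^ j := by
    funext q; exact hp q.1 q.2
  rw [he]
  refine ContDiff.sum fun i _ => ContDiff.sum fun j _ => ?_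
  exact (contDiff_const.mul (contDiff_fst.pow i)).mul (contDiff_snd.pow j)

lemma pdx_hasDerivAt {u : ℝ → ℝ → ℝ}
    (h : ContDiff ℝ 1 (fun p : ℝ × ℝ => u p.1 p.2)) (x y : ℝ) :
    HasDerivAt (fun t => u t y)
      ((fderiv ℝ (fun p : ℝ × ℝ => u p.1 p.2) (x, y)) (1, 0)) x := by
  have h1 := (h.differentiable one_ne_zero (x, y)).hasFDerivAt
  have h2 : HasDerivAt (fun t : ℝ => ((t, y) : ℝ × ℝ)) ((1 : ℝ), (0 : ℝ)) x :=
    HasDerivAt.prodMk (hasDerivAt_id x) (hasDerivAt_const x y)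
  exact h1.comp_hasDerivAt x h2

lemma pdy_hasDerivAt {v : ℝ → ℝ → ℝ}
    (h : ContDiff ℝ 1 (fun p : ℝ × ℝ => v p.1 p.2)) (x y : ℝ) :
    HasDerivAt (fun t => v x t)
      ((fderiv ℝ (fun p : ℝ × ℝ => v p.1 p.2) (x, y)) (0, 1)) y := by
  have h1 := (h.differentiable one_ne_zero (x, y)).hasFDerivAt
  have h2 : HasDerivAt (fun t : ℝ => ((x, t) : ℝ × ℝ)) ((0 : ℝ), (1 : ℝ)) y :=
    HasDerivAt.prodMk (hasDerivAt_const y x) (hasDerivAt_id y)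
  exact h1.comp_hasDerivAt y h2

lemma pdx_eq {u : ℝ → ℝ → ℝ}
    (h : ContDiff ℝ 1 (fun p : ℝ × ℝ => u p.1 p.2)) (x y : ℝ) :
    pdx u x y = (fderiv ℝ (fun p : ℝ × ℝ => u p.1 p.2) (x, y)) (1, 0) :=
  (pdx_hasDerivAt h x y).deriv

lemma pdy_eq {v : ℝ → ℝ → ℝ}
    (h : ContDiff ℝ 1 (fun p : ℝ × ℝ => v p.1 p.2)) (x y : ℝ) :
    pdy v x y = (fderiv ℝ (fun p : ℝ × ℝ => v p.1 p.2) (x, y)) (0, 1) :=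
  (pdy_hasDerivAt h x y).deriv

lemma cont_pdx {u : ℝ → ℝ → ℝ}
    (h : ContDiff ℝ 1 (fun p : ℝ × ℝ => u p.1 p.2)) :
    Continuous fun x => pdx u x 1 := by
  have : (fun x => pdx u x 1) = fun x =>
      (fderiv ℝ (fun p : ℝ × ℝ => u p.1 p.2) (x, 1)) (1, 0) := by
    funext x; exact pdx_eq h x 1
  rw [this]
  exact (((h.continuous_fderiv one_ne_zero).comp
    (continuous_id.prodMk continuous_const)).clm_apply continuous_const)

lemma cont_pdy {v : ℝ → ℝ → ℝ}
    (h : ContDiff ℝ 1 (fun p : ℝ × ℝ => v p.1 p.2)) :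
    Continuous fun x => pdy v x 1 := by
  have : (fun x => pdy v x 1) = fun x =>
      (fderiv ℝ (fun p : ℝ × ℝ => v p.1 p.2) (x, 1)) (0, 1) := by
    funext x; exact pdy_eq h x 1
  rw [this]
  exact (((h.continuous_fderiv one_ne_zero).comp
    (continuous_id.prodMk continuous_const)).clm_apply continuous_const)

lemma ftc_pdx {u : ℝ → ℝ → ℝ}
    (h : ContDiff ℝ 1 (fun p : ℝ × ℝ => u p.1 p.2)) :
    (∫ x in (-1 : ℝ)..1, pdx u x 1) = u 1 1 - u (-1) 1 := by
  have hd : ∀ x ∈ Set.uIcc (-1 : ℝ) 1, DifferentiableAt ℝ (fun t => u t 1) x :=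
    fun x _ => (pdx_hasDerivAt h x 1).differentiableAt
  exact intervalIntegral.integral_deriv_eq_sub hd
    ((cont_pdx h).intervalIntegrable _ _)

/-- The mean value of the divergence of the `RT₂` interpolant over the top edge
equals that of the interpolated field. -/
theorem rt2_interp_top_edge_div_mean
    (u v uk vk : ℝ → ℝ → ℝ)
    (hu : ContDiff ℝ 1 (fun p : ℝ × ℝ => u p.1 p.2))
    (hv : ContDiff ℝ 1 (fun p : ℝ × ℝ => v p.1 p.2))
    (huk : MemQ 3 2 uk) (hvk : MemQ 2 3 vk)
    (hcorner_u : ∀ x ∈ ({-1, 1} : Set ℝ), ∀ y ∈ ({-1, 1} : Set ℝ), uk x y = u x y)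
    (hcorner_v : ∀ x ∈ ({-1, 1} : Set ℝ), ∀ y ∈ ({-1, 1} : Set ℝ), vk x y = v x y)
    (hcorner_ux : ∀ x ∈ ({-1, 1} : Set ℝ), ∀ y ∈ ({-1, 1} : Set ℝ),
      pdx uk x y = pdx u x y)
    (hcorner_vy : ∀ x ∈ ({-1, 1} : Set ℝ), ∀ y ∈ ({-1, 1} : Set ℝ),
      pdy vk x y = pdy v x y)
    (hedge_u : ∀ x ∈ ({-1, 1} : Set ℝ),
      (∫ y in (-1 : ℝ)..1, uk x y) = ∫ y in (-1 : ℝ)..1, u x y)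
    (hedge_ux : ∀ x ∈ ({-1, 1} : Set ℝ),
      (∫ y in (-1 : ℝ)..1, pdx uk x y) = ∫ y in (-1 : ℝ)..1, pdx u x y)
    (hedge_v : ∀ y ∈ ({-1, 1} : Set ℝ),
      (∫ x in (-1 : ℝ)..1, vk x y) = ∫ x in (-1 : ℝ)..1, v x y)
    (hedge_vy : ∀ y ∈ ({-1, 1} : Set ℝ),
      (∫ x in (-1 : ℝ)..1, pdy vk x y) = ∫ x in (-1 : ℝ)..1, pdy v x y) :
    (∫ x in (-1 : ℝ)..1, (pdx uk x 1 + pdy vk x 1)) =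
      ∫ x in (-1 : ℝ)..1, (pdx u x 1 + pdy v x 1) := by
  have hukC := memQ_contDiff huk
  have hvkC := memQ_contDiff hvk
  have hm1 : (-1 : ℝ) ∈ ({-1, 1} : Set ℝ) := Or.inl rfl
  have hp1 : (1 : ℝ) ∈ ({-1, 1} : Set ℝ) := Or.inr rfl
  rw [intervalIntegral.integral_add ((cont_pdx hukC).intervalIntegrable _ _)
      ((cont_pdy hvkC).intervalIntegrable _ _),
    intervalIntegral.integral_add ((cont_pdx hu).intervalIntegrable _ _)
      ((cont_pdy hv).intervalIntegrable _ _),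
    ftc_pdx hukC, ftc_pdx hu, hedge_vy 1 hp1,
    hcorner_u 1 hp1 1 hp1, hcorner_u (-1) hm1 1 hp1]
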